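/- The convolution of two even bump functions is an even bump function: if e, f : ℝ → ℝ are even, nonnegative, compactly supported, and nonincreasing on [0,∞), then their convolution g(x) = ∫ e(y) f(x−y) dy is also even, nonnegative, compactly supported, and nonincreasing on [0,∞). -/

import Mathlib

open MeasureTheory Real Set

noncomputable def convF (f g : ℝ → ℝ) : ℝ → ℝ := fun x => ∫ y : ℝ, f y * g (x - y)

/-- Bounded measurable functions vanishing outside a compact set are integrable. -/
lemma integ_aux {F : ℝ → ℝ} (hF : Measurable F) {C : ℝ} (hb : ∀ t, |F t| ≤ C)
    {K : Set ℝ} (hK : IsCompact K) (h0 : ∀ t ∉ K, F t = 0) : Integrable F := by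
  have hind : Integrable (K.indicator (fun _ => C)) := by
    rw [integrable_indicator_iff hK.measurableSet]
    exact (integrableOn_const_iff).mpr (Or.inr hK.measure_lt_top)
  apply hind.mono' hF.aestronglyMeasurable
  filter_upwards with t
  by_cases ht : t ∈ K
  · rw [Real.norm_eq_abs, Set.indicator_of_mem ht]
    exact hb t
  · rw [Real.norm_eq_abs, Set.indicator_of_notMem ht, h0 t ht, abs_zero]

/-- For an even function nonincreasing on `[0,∞)`: `|u| ≤ |v| → f v ≤ f u`. -/
lemma even_mono_abs {f : ℝ → ℝ} (hf_even : ∀ x, f x = f (-x))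
    (hf_mono : ∀ x y, 0 ≤ x → x ≤ y → f y ≤ f x) {u v : ℝ} (h : |u| ≤ |v|) :
    f v ≤ f u := by
  have hu : f u = f |u| := by
    rcases abs_cases u with ⟨h1, _⟩ | ⟨h1, _⟩
    · rw [h1]
    · rw [h1, ← hf_even]
  have hv : f v = f |v| := by
    rcases abs_cases v with ⟨h1, _⟩ | ⟨h1, _⟩
    · rw [h1]
    · rw [h1, ← hf_even]
  rw [hu, hv]
  exact hf_mono _ _ (abs_nonneg u) h

/-- The pointwise inequality at the heart of the monotonicity proof. -/
lemma key_pointwise {e f : ℝ → ℝ}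
    (he_even : ∀ x, e x = e (-x)) (hf_even : ∀ x, f x = f (-x))
    (he_mono : ∀ x y, 0 ≤ x → x ≤ y → e y ≤ e x)
    (hf_mono : ∀ x y, 0 ≤ x → x ≤ y → f y ≤ f x)
    {x y : ℝ} (hx : 0 ≤ x) (hy : 0 ≤ y) (hxy : x ≤ y) (t : ℝ) :
    0 ≤ (e t - e (x + y - t)) * (f (x - t) - f (y - t)) := by
  rcases le_total t ((x + y) / 2) with hm | hm
  · -- both factors nonneg
    have h1 : |t| ≤ |x + y - t| := by
      have : |t| ≤ x + y - t := abs_le.mpr ⟨by linarith, by linarith⟩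
      exact this.trans (le_abs_self _)
    have h2 : |x - t| ≤ |y - t| := by
      have : |x - t| ≤ y - t := abs_le.mpr ⟨by linarith, by linarith⟩
      exact this.trans (le_abs_self _)
    exact mul_nonneg (sub_nonneg.mpr (even_mono_abs he_even he_mono h1))
      (sub_nonneg.mpr (even_mono_abs hf_even hf_mono h2))
  · -- both factors nonpos
    have h1 : |x + y - t| ≤ |t| := by
      have : |x + y - t| ≤ t := abs_le.mpr ⟨by linarith, by linarith⟩
      exact this.trans (le_abs_self _)
    have h2 : |y - t| ≤ |x - t| := by
      have h3 : |y - t| ≤ t - x := abs_le.mpr ⟨by linarith, by linarith⟩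
      have h4 : t - x ≤ |x - t| := by
        rw [abs_sub_comm]; exact le_abs_self _
      exact h3.trans h4
    have hA : e t - e (x + y - t) ≤ 0 :=
      sub_nonpos.mpr (even_mono_abs he_even he_mono h1)
    have hB : f (x - t) - f (y - t) ≤ 0 :=
      sub_nonpos.mpr (even_mono_abs hf_even hf_mono h2)
    nlinarith [hA, hB]

/-- The convolution of two even bumps (even, nonnegative, compactly supported,
nonincreasing on `[0,∞)`, measurable and bounded) is again an even bump. -/
theorem convolution_even_bump (e f : ℝ → ℝ)
    (he_meas : Measurable e) (hf_meas : Measurable f)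
    (he_bdd : ∃ M, ∀ x, |e x| ≤ M) (hf_bdd : ∃ M, ∀ x, |f x| ≤ M)
    (he_even : ∀ x, e x = e (-x)) (hf_even : ∀ x, f x = f (-x))
    (he_nonneg : ∀ x, 0 ≤ e x) (hf_nonneg : ∀ x, 0 ≤ f x)
    (he_supp : HasCompactSupport e) (hf_supp : HasCompactSupport f)
    (he_mono : ∀ x y, 0 ≤ x → x ≤ y → e y ≤ e x)
    (hf_mono : ∀ x y, 0 ≤ x → x ≤ y → f y ≤ f x) :
    (∀ x, convF e f x = convF e f (-x)) ∧
    (∀ x, 0 ≤ convF e f x) ∧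
    HasCompactSupport (convF e f) ∧
    (∀ x y, 0 ≤ x → x ≤ y → convF e f y ≤ convF e f x) := by
  obtain ⟨Me, hMe⟩ := he_bdd
  obtain ⟨Mf, hMf⟩ := hf_bdd
  -- integrability of the integrands
  have hbound : ∀ a b : ℝ, |e a * f b| ≤ Me * Mf := by
    intro a b
    rw [abs_mul]
    exact mul_le_mul (hMe a) (hMf b) (abs_nonneg _) ((abs_nonneg _).trans (hMe a))
  have hint1 : ∀ x : ℝ, Integrable (fun t => e t * f (x - t)) := by
    intro x
    refine integ_aux (he_meas.mul (hf_meas.comp (measurable_const.sub measurable_id)))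
      (fun t => hbound t (x - t)) he_supp ?_
    intro t ht
    rw [image_eq_zero_of_notMem_tsupport ht, zero_mul]
  have hint2 : ∀ c x : ℝ, Integrable (fun t => e (c - t) * f (x - t)) := by
    intro c x
    have hK : IsCompact ((fun u => x - u) '' tsupport f) := hf_supp.image (continuous_const.sub continuous_id)
    refine integ_aux
      ((he_meas.comp (measurable_const.sub measurable_id)).mul
        (hf_meas.comp (measurable_const.sub measurable_id)))
      (fun t => hbound (c - t) (x - t)) hK ?_
    intro t ht
    have : x - t ∉ tsupport f := by
      intro h
      exact ht ⟨x - t, h, by ring⟩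
    rw [image_eq_zero_of_notMem_tsupport this, mul_zero]
  -- evenness
  have heven : ∀ x, convF e f x = convF e f (-x) := by
    intro x
    have := MeasureTheory.integral_neg_eq_self
      (fun t => e t * f (-x - t)) (volume : Measure ℝ)
    calc convF e f x = ∫ t : ℝ, e (-t) * f (-x - (-t)) := by
          apply integral_congr_ae
          filter_upwards with t
          rw [← he_even]
          congr 1
          rw [hf_even (x - t)]
          ring_nf
      _ = ∫ t : ℝ, e t * f (-x - t) := this
      _ = convF e f (-x) := rfl
  refine ⟨heven, ?_, ?_, ?_⟩
  · -- nonnegativity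
    intro x
    exact integral_nonneg fun t => mul_nonneg (he_nonneg t) (hf_nonneg _)
  · -- compact support
    obtain ⟨Re, hRe⟩ := he_supp.isBounded.subset_closedBall 0
    obtain ⟨Rf, hRf⟩ := hf_supp.isBounded.subset_closedBall 0
    apply HasCompactSupport.intro (isCompact_closedBall (0 : ℝ) (Re + Rf))
    intro x hx
    simp only [Metric.mem_closedBall, dist_zero_right, Real.norm_eq_abs, not_le] at hx
    have : ∀ t : ℝ, e t * f (x - t) = 0 := by
      intro t
      by_cases ht : t ∈ tsupport e
      · have h1 : |t| ≤ Re := by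
          have := hRe ht
          simpa [Metric.mem_closedBall, dist_zero_right] using this
        have h2 : x - t ∉ tsupport f := by
          intro h
          have : |x - t| ≤ Rf := by
            have := hRf h
            simpa [Metric.mem_closedBall, dist_zero_right] using this
          have : |x| ≤ Re + Rf := by
            calc |x| = |t + (x - t)| := by ring_nf
              _ ≤ |t| + |x - t| := abs_add_le _ _
              _ ≤ Re + Rf := add_le_add h1 this
          linarith
        rw [image_eq_zero_of_notMem_tsupport h2, mul_zero]
      · rw [image_eq_zero_of_notMem_tsupport ht, zero_mul]
    show (∫ t : ℝ, e t * f (x - t)) = 0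
    simp [this]
  · -- monotonicity on [0, ∞)
    intro x y hx hxy
    have hy : 0 ≤ y := hx.trans hxy
    set c := x + y with hc
    -- the two substituted integrals
    have sub1 : (∫ t : ℝ, e (c - t) * f (x - t)) = ∫ t : ℝ, e t * f (y - t) := by
      have := MeasureTheory.integral_sub_left_eq_self
        (fun u => e u * f (x - (c - u))) (volume : Measure ℝ) c
      calc (∫ t : ℝ, e (c - t) * f (x - t))
          = ∫ t : ℝ, e (c - t) * f (x - (c - (c - t))) := by
            apply integral_congr_ae; filter_upwards with t; ring_nf
        _ = ∫ u : ℝ, e u * f (x - (c - u)) := this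
        _ = ∫ u : ℝ, e u * f (y - u) := by
            apply integral_congr_ae; filter_upwards with u
            congr 1
            rw [hf_even (y - u), hc]
            ring_nf
    have sub2 : (∫ t : ℝ, e (c - t) * f (y - t)) = ∫ t : ℝ, e t * f (x - t) := by
      have := MeasureTheory.integral_sub_left_eq_self
        (fun u => e u * f (y - (c - u))) (volume : Measure ℝ) c
      calc (∫ t : ℝ, e (c - t) * f (y - t))
          = ∫ t : ℝ, e (c - t) * f (y - (c - (c - t))) := by
            apply integral_congr_ae; filter_upwards with t; ring_nf
        _ = ∫ u : ℝ, e u * f (y - (c - u)) := this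
        _ = ∫ u : ℝ, e u * f (x - u) := by
            apply integral_congr_ae; filter_upwards with u
            congr 1
            rw [hf_even (x - u), hc]
            ring_nf
    have hJ : 0 ≤ ∫ t : ℝ, (e t - e (c - t)) * (f (x - t) - f (y - t)) :=
      integral_nonneg fun t =>
        key_pointwise he_even hf_even he_mono hf_mono hx hy hxy t
    have hsplit : (∫ t : ℝ, (e t - e (c - t)) * (f (x - t) - f (y - t)))
        = (∫ t : ℝ, e t * f (x - t)) - (∫ t : ℝ, e t * f (y - t))
          - ((∫ t : ℝ, e (c - t) * f (x - t)) - (∫ t : ℝ, e (c - t) * f (y - t))) := by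
      calc (∫ t : ℝ, (e t - e (c - t)) * (f (x - t) - f (y - t)))
          = ∫ t : ℝ, (e t * f (x - t) - e t * f (y - t))
              - (e (c - t) * f (x - t) - e (c - t) * f (y - t)) := by
            apply integral_congr_ae; filter_upwards with t; ring
        _ = (∫ t : ℝ, (e t * f (x - t) - e t * f (y - t)))
              - ∫ t : ℝ, (e (c - t) * f (x - t) - e (c - t) * f (y - t)) :=
            integral_sub ((hint1 x).sub (hint1 y)) ((hint2 c x).sub (hint2 c y))
        _ = (∫ t : ℝ, e t * f (x - t)) - (∫ t : ℝ, e t * f (y - t))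
              - ((∫ t : ℝ, e (c - t) * f (x - t)) - (∫ t : ℝ, e (c - t) * f (y - t))) := by
            rw [integral_sub (hint1 x) (hint1 y), integral_sub (hint2 c x) (hint2 c y)]
    rw [sub1, sub2] at hsplit
    have : convF e f y ≤ convF e f x := by
      show (∫ t : ℝ, e t * f (y - t)) ≤ ∫ t : ℝ, e t * f (x - t)
      nlinarith [hJ, hsplit]
    exact this
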